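/- arXiv:2101.06493 — 4 statements merged into one kernel-verified Lean document; each statement's English description precedes it below -/
import Mathlib

section
/- Let H be a separable Hilbert space with orthonormal basis (eₙ)ₙ, let (Ω, F, ℙ) be a probability space, and let (Xₙ)ₙ be a sequence of real-valued random variables on Ω. If the partial sums S_N = Σ_{n=1}^N Xₙ eₙ converge in probability (i.e., in measure) to some measurable map S : Ω → H, then S_N converges to S ℙ-almost surely. -/
open MeasureTheory Filter Topology

/-- If the partial sums `S_N = ∑_{n<N} Xₙ eₙ` along an orthonormal (Hilbert) basis of a
separable Hilbert space converge in probability to a measurable map `S`, then they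
converge to `S` almost surely. -/
theorem stmt_0 {H : Type*} [NormedAddCommGroup H] [InnerProductSpace ℝ H] [CompleteSpace H]
    [MeasurableSpace H] [BorelSpace H] [TopologicalSpace.SeparableSpace H]
    {Ω : Type*} [MeasurableSpace Ω] (P : Measure Ω) [IsProbabilityMeasure P]
    (e : HilbertBasis ℕ ℝ H) (X : ℕ → Ω → ℝ) (hX : ∀ n, Measurable (X n))
    (S : Ω → H) (hS : Measurable S)
    (h : TendstoInMeasure P (fun N ω => ∑ n ∈ Finset.range N, X n ω • e n) atTop S) :
    ∀ᵐ ω ∂P, Tendsto (fun N => ∑ n ∈ Finset.range N, X n ω • e n) atTop (𝓝 (S ω)) := by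
  obtain ⟨ns, hmono, hae⟩ := h.exists_seq_tendsto_ae
  filter_upwards [hae] with ω hω
  have horth := e.orthonormal
  have hinner : ∀ n N, (inner ℝ (e n) (∑ m ∈ Finset.range N, X m ω • e m) : ℝ)
      = if n < N then X n ω else 0 := by
    intro n N
    rw [inner_sum]
    simp only [inner_smul_right, orthonormal_iff_ite.mp horth n]
    simp [Finset.sum_ite_eq, mul_comm]
  have key : ∀ n, X n ω = (inner ℝ (e n) (S ω) : ℝ) := by
    intro n
    have hc : Tendsto (fun k => (inner ℝ (e n)
        (∑ m ∈ Finset.range (ns k), X m ω • e m) : ℝ)) atTop (𝓝 (inner ℝ (e n) (S ω))) :=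
      (Tendsto.inner tendsto_const_nhds hω)
    have heq : ∀ᶠ k in atTop, (inner ℝ (e n)
        (∑ m ∈ Finset.range (ns k), X m ω • e m) : ℝ) = X n ω := by
      filter_upwards [eventually_gt_atTop n] with k hk
      rw [hinner]
      simp [lt_of_lt_of_le hk (hmono.le_apply)]
    exact (tendsto_nhds_unique (hc.congr' heq) tendsto_const_nhds).symm
  have hs : HasSum (fun n => (inner ℝ (e n) (S ω) : ℝ) • e n) (S ω) := by
    simpa [HilbertBasis.repr_apply_apply] using e.hasSum_repr (S ω)
  have ht := hs.tendsto_sum_nat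
  refine ht.congr fun N => ?_
  exact Finset.sum_congr rfl fun n _ => by rw [key n]
end

section
/- Let α ∈ (1/2, 1), let γ ∈ [1/(2α), 1), let (λₙ)ₙ be a nondecreasing sequence of reals with 0 < λ₁ ≤ λ₂ ≤ ⋯, and let (σₙ)ₙ be a sequence of strictly positive reals. Then the following are equivalent: (a) there exists C₀ > 0 such that for every t > 0, sup_n (1/σₙ)(2αλₙ/(1 − e^{−2αλₙ t}))^{1/(2α)} e^{−λₙ t} ≤ C₀ t^{−γ}; (b) there exists C₁ > 0 such that σₙ ≥ C₁ λₙ^{1/(2α) − γ} for every n. -/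
open Filter Topology

private lemma aux_exp_ineq (x : ℝ) : x * Real.exp (-x) ≤ 1 - Real.exp (-x) := by
  have h := Real.add_one_le_exp x
  have h2 : Real.exp x * Real.exp (-x) = 1 := by rw [← Real.exp_add]; simp
  nlinarith [mul_nonneg (by linarith : (0:ℝ) ≤ Real.exp x - 1 - x) (Real.exp_pos (-x)).le]

private lemma aux_exp_lt_one {x : ℝ} (hx : 0 < x) : Real.exp (-x) < 1 := by
  simpa using Real.exp_lt_exp.mpr (show -x < 0 by linarith)

/-- Equivalence of the gradient-estimate Hypothesis (iii) with its reformulation (iii'):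
for `α ∈ (1/2,1)`, `γ ∈ [1/(2α),1)`, `0 < λ₁ ≤ λ₂ ≤ ⋯` and `σₙ > 0`,
`sup_n (1/σₙ)(2αλₙ/(1−e^{−2αλₙt}))^{1/(2α)} e^{−λₙt} ≤ C₀ t^{−γ}` for all `t > 0`
holds for some `C₀ > 0` iff `σₙ ≥ C₁ λₙ^{1/(2α)−γ}` for all `n`, for some `C₁ > 0`. -/
theorem stmt_9 (α γ : ℝ) (hα : α ∈ Set.Ioo (1 / 2 : ℝ) 1)
    (hγ : γ ∈ Set.Ico (1 / (2 * α)) 1)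
    (lam σ : ℕ → ℝ) (hmono : Monotone lam) (hpos : 0 < lam 0) (hσ : ∀ n, 0 < σ n) :
    (∃ C₀ > (0 : ℝ), ∀ t > (0 : ℝ), ∀ n,
        (1 / σ n) * (2 * α * lam n / (1 - Real.exp (-(2 * α * lam n * t)))) ^ (1 / (2 * α)) *
            Real.exp (-lam n * t)
          ≤ C₀ * t ^ (-γ))
      ↔ ∃ C₁ > (0 : ℝ), ∀ n, σ n ≥ C₁ * lam n ^ (1 / (2 * α) - γ) := by
  obtain ⟨hα1, hα2⟩ := hα
  obtain ⟨hγ1, hγ2⟩ := hγ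
  have hα0 : 0 < α := by linarith
  set β : ℝ := 1 / (2 * α) with hβdef
  have hβ0 : 0 < β := by positivity
  have haβ : 2 * α * β = 1 := by rw [hβdef]; field_simp
  have hβγ : β ≤ γ := hγ1
  have hE : 0 < 1 - Real.exp (-(2 * α)) := by
    have := aux_exp_lt_one (show (0:ℝ) < 2 * α by linarith)
    linarith
  set K : ℝ := (2 * α / (1 - Real.exp (-(2 * α)))) ^ β with hKdef
  have hK : 0 < K := Real.rpow_pos_of_pos (by positivity) β
  have hlam : ∀ n, 0 < lam n := fun n => lt_of_lt_of_le hpos (hmono (Nat.zero_le n))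
  constructor
  · rintro ⟨C₀, hC₀, h⟩
    refine ⟨K * Real.exp (-1) / C₀, by positivity, fun n => ?_⟩
    have hln := hlam n
    have ht := h (1 / lam n) (by positivity) n
    have e1 : 2 * α * lam n * (1 / lam n) = 2 * α := by field_simp
    have e2 : -lam n * (1 / lam n) = -1 := by field_simp
    have e3 : (1 / lam n : ℝ) ^ (-γ) = lam n ^ γ := by
      rw [one_div, Real.inv_rpow hln.le, Real.rpow_neg hln.le, inv_inv]
    rw [e1, e2, e3] at ht
    have e4 : (2 * α * lam n / (1 - Real.exp (-(2 * α)))) ^ β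
        = K * lam n ^ β := by
      rw [hKdef, ← Real.mul_rpow (by positivity) hln.le]
      ring_nf
    rw [e4] at ht
    have ht' : K * Real.exp (-1) * lam n ^ β ≤ σ n * (C₀ * lam n ^ γ) := by
      have := mul_le_mul_of_nonneg_left ht (hσ n).le
      calc K * Real.exp (-1) * lam n ^ β
          = σ n * (1 / σ n * (K * lam n ^ β) * Real.exp (-1)) := by
            field_simp [(hσ n).ne']
        _ ≤ σ n * (C₀ * lam n ^ γ) := this
    rw [ge_iff_le, Real.rpow_sub hln, div_mul_div_comm, div_le_iff₀ (by positivity)]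
    calc K * Real.exp (-1) * lam n ^ β ≤ σ n * (C₀ * lam n ^ γ) := ht'
      _ = σ n * (C₀ * lam n ^ γ) := rfl
  · rintro ⟨C₁, hC₁, h⟩
    refine ⟨(1 + K) / C₁, by positivity, fun t ht n => ?_⟩
    have hln := hlam n
    set x : ℝ := 2 * α * lam n * t with hxdef
    have hx : 0 < x := by positivity
    have hEx : 0 < 1 - Real.exp (-x) := by
      have := aux_exp_lt_one hx; linarith
    -- reduce to the clean inequality
    have hgoal : ∀ M : ℝ, 0 ≤ M →
        M ≤ (1 + K) * (t ^ (-γ) * lam n ^ (β - γ)) →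
        1 / σ n * M ≤ (1 + K) / C₁ * t ^ (-γ) := by
      intro M hM hMle
      have hσn := hσ n
      have hσ' := h n
      have h1 : 1 / σ n ≤ 1 / (C₁ * lam n ^ (β - γ)) := by
        apply one_div_le_one_div_of_le (by positivity) hσ'
      have hP : 0 < lam n ^ (β - γ) := Real.rpow_pos_of_pos hln _
      calc 1 / σ n * M ≤ 1 / (C₁ * lam n ^ (β - γ)) * M := by
            apply mul_le_mul_of_nonneg_right h1 hM
        _ ≤ 1 / (C₁ * lam n ^ (β - γ)) * ((1 + K) * (t ^ (-γ) * lam n ^ (β - γ))) := by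
            apply mul_le_mul_of_nonneg_left hMle (by positivity)
        _ = (1 + K) / C₁ * t ^ (-γ) := by field_simp
    have hMnn : (0:ℝ) ≤ (2 * α * lam n / (1 - Real.exp (-x))) ^ β * Real.exp (-lam n * t) := by
      positivity
    refine mul_assoc (1 / σ n) _ _ ▸ hgoal _ hMnn ?_
    rcases le_total (lam n * t) 1 with hcase | hcase
    · -- small s: use the universal bound ≤ t^{-β}
      have h2 : 2 * α * lam n / (1 - Real.exp (-x)) ≤ Real.exp x / t := by
        have hb : x * Real.exp (-x) ≤ 1 - Real.exp (-x) := aux_exp_ineq x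
        have hxe : 0 < x * Real.exp (-x) := by positivity
        have step : 2 * α * lam n / (1 - Real.exp (-x)) ≤ 2 * α * lam n / (x * Real.exp (-x)) :=
          div_le_div_of_nonneg_left (by positivity) hxe hb
        have heq : 2 * α * lam n / (x * Real.exp (-x)) = Real.exp x / t := by
          rw [Real.exp_neg, hxdef]
          field_simp
        linarith [step, heq ▸ step]
      have h3 : (2 * α * lam n / (1 - Real.exp (-x))) ^ β ≤ Real.exp (lam n * t) / t ^ β := by
        calc (2 * α * lam n / (1 - Real.exp (-x))) ^ β ≤ (Real.exp x / t) ^ β :=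
              Real.rpow_le_rpow (by positivity) h2 hβ0.le
          _ = Real.exp (lam n * t) / t ^ β := by
              have hxb : x * β = lam n * t := by
                calc x * β = 2 * α * β * (lam n * t) := by rw [hxdef]; ring
                  _ = lam n * t := by rw [haβ, one_mul]
              rw [Real.div_rpow (Real.exp_pos x).le ht.le, ← Real.exp_mul, hxb]
      have h4 : (2 * α * lam n / (1 - Real.exp (-x))) ^ β * Real.exp (-lam n * t)
          ≤ t ^ (-β) := by
        have hexp : Real.exp (lam n * t) * Real.exp (-lam n * t) = 1 := by
          rw [← Real.exp_add]; ring_nf; exact Real.exp_zero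
        calc (2 * α * lam n / (1 - Real.exp (-x))) ^ β * Real.exp (-lam n * t)
            ≤ Real.exp (lam n * t) / t ^ β * Real.exp (-lam n * t) :=
              mul_le_mul_of_nonneg_right h3 (Real.exp_pos _).le
          _ = t ^ (-β) := by
              rw [Real.rpow_neg ht.le, div_mul_eq_mul_div, hexp, one_div]
      have h5 : t ^ (-β) ≤ t ^ (-γ) * lam n ^ (β - γ) := by
        have htle : t ≤ 1 / lam n := by
          rw [le_div_iff₀ hln]; linarith [hcase]
        have key1 : t ^ (γ - β) ≤ lam n ^ (β - γ) := by
          calc t ^ (γ - β) ≤ (1 / lam n) ^ (γ - β) :=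
                Real.rpow_le_rpow ht.le htle (by linarith)
            _ = lam n ^ (β - γ) := by
                rw [one_div, Real.inv_rpow hln.le, ← Real.rpow_neg hln.le, neg_sub]
        calc t ^ (-β) = t ^ (-γ) * t ^ (γ - β) := by
              rw [← Real.rpow_add ht]; ring_nf
          _ ≤ t ^ (-γ) * lam n ^ (β - γ) :=
              mul_le_mul_of_nonneg_left key1 (Real.rpow_nonneg ht.le _)
      calc (2 * α * lam n / (1 - Real.exp (-x))) ^ β * Real.exp (-lam n * t)
          ≤ t ^ (-γ) * lam n ^ (β - γ) := h4.trans h5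
        _ ≤ (1 + K) * (t ^ (-γ) * lam n ^ (β - γ)) := by
            nlinarith [Real.rpow_nonneg ht.le (-γ), Real.rpow_nonneg hln.le (β - γ),
              mul_nonneg (Real.rpow_nonneg ht.le (-γ)) (Real.rpow_nonneg hln.le (β - γ))]
    · -- large s
      have hxa : 2 * α ≤ x := by
        rw [hxdef]; nlinarith
      have hE2 : 1 - Real.exp (-(2 * α)) ≤ 1 - Real.exp (-x) := by
        have := Real.exp_le_exp.mpr (neg_le_neg hxa); linarith
      have h2 : 2 * α * lam n / (1 - Real.exp (-x)) ≤ 2 * α / (1 - Real.exp (-(2 * α))) * lam n := by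
        calc 2 * α * lam n / (1 - Real.exp (-x))
            ≤ 2 * α * lam n / (1 - Real.exp (-(2 * α))) :=
              div_le_div_of_nonneg_left (by positivity) hE hE2
          _ = 2 * α / (1 - Real.exp (-(2 * α))) * lam n := by ring
      have h3 : (2 * α * lam n / (1 - Real.exp (-x))) ^ β ≤ K * lam n ^ β := by
        calc (2 * α * lam n / (1 - Real.exp (-x))) ^ β
            ≤ (2 * α / (1 - Real.exp (-(2 * α))) * lam n) ^ β :=
              Real.rpow_le_rpow (by positivity) h2 hβ0.le
          _ = K * lam n ^ β := Real.mul_rpow (by positivity) hln.le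
      have h5 : lam n ^ γ * Real.exp (-(lam n * t)) ≤ t ^ (-γ) := by
        have hst : (1:ℝ) ≤ lam n * t := hcase
        have h6 : (lam n * t) ^ γ ≤ Real.exp (lam n * t) := by
          calc (lam n * t) ^ γ ≤ (lam n * t) ^ (1:ℝ) :=
                Real.rpow_le_rpow_of_exponent_le hst (le_of_lt hγ2)
            _ = lam n * t := Real.rpow_one _
            _ ≤ Real.exp (lam n * t) := by linarith [Real.add_one_le_exp (lam n * t)]
        have h7 : (lam n * t) ^ γ * Real.exp (-(lam n * t)) ≤ 1 := by
          have hexp : Real.exp (lam n * t) * Real.exp (-(lam n * t)) = 1 := by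
            rw [← Real.exp_add]; ring_nf; exact Real.exp_zero
          calc (lam n * t) ^ γ * Real.exp (-(lam n * t))
              ≤ Real.exp (lam n * t) * Real.exp (-(lam n * t)) :=
                mul_le_mul_of_nonneg_right h6 (Real.exp_pos _).le
            _ = 1 := hexp
        have h8 : lam n ^ γ * Real.exp (-(lam n * t))
            = ((lam n * t) ^ γ * Real.exp (-(lam n * t))) * t ^ (-γ) := by
          rw [Real.mul_rpow hln.le ht.le, Real.rpow_neg ht.le]
          have htγ : t ^ γ ≠ 0 := by positivity
          field_simp
        rw [h8]
        calc ((lam n * t) ^ γ * Real.exp (-(lam n * t))) * t ^ (-γ)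
            ≤ 1 * t ^ (-γ) := mul_le_mul_of_nonneg_right h7 (Real.rpow_nonneg ht.le _)
          _ = t ^ (-γ) := one_mul _
      have h9 : lam n ^ β * Real.exp (-lam n * t) ≤ t ^ (-γ) * lam n ^ (β - γ) := by
        have hsplit : lam n ^ β = lam n ^ (β - γ) * lam n ^ γ := by
          rw [← Real.rpow_add hln]; ring_nf
        calc lam n ^ β * Real.exp (-lam n * t)
            = lam n ^ (β - γ) * (lam n ^ γ * Real.exp (-(lam n * t))) := by
              rw [hsplit]; ring_nf
          _ ≤ lam n ^ (β - γ) * t ^ (-γ) :=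
              mul_le_mul_of_nonneg_left h5 (Real.rpow_nonneg hln.le _)
          _ = t ^ (-γ) * lam n ^ (β - γ) := by ring
      calc (2 * α * lam n / (1 - Real.exp (-x))) ^ β * Real.exp (-lam n * t)
          ≤ K * lam n ^ β * Real.exp (-lam n * t) :=
            mul_le_mul_of_nonneg_right h3 (Real.exp_pos _).le
        _ = K * (lam n ^ β * Real.exp (-lam n * t)) := by ring
        _ ≤ K * (t ^ (-γ) * lam n ^ (β - γ)) := mul_le_mul_of_nonneg_left h9 hK.le
        _ ≤ (1 + K) * (t ^ (-γ) * lam n ^ (β - γ)) := by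
            apply mul_le_mul_of_nonneg_right (by linarith)
              (mul_nonneg (Real.rpow_nonneg ht.le _) (Real.rpow_nonneg hln.le _))
end

section
/- Let N ∈ ℕ, let Σ be a symmetric positive-definite real N×N matrix, let ρ(y) = exp(−⟨Σ⁻¹ y, y⟩/2) for y ∈ ℝᴺ, let B : ℝᴺ → ℝᴺ be a linear map, and let φ : ℝᴺ → ℝ be bounded and Borel measurable. Then the function F(x) = ∫_{ℝᴺ} φ(Bx + y) ρ(y) dy is (Fréchet) differentiable at every x ∈ ℝᴺ, and for every direction h ∈ ℝᴺ its derivative is ⟨∇F(x), h⟩ = ∫_{ℝᴺ} φ(Bx + y) ⟨Σ⁻¹ y, B h⟩ ρ(y) dy. -/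
open MeasureTheory Filter Topology

noncomputable section
namespace Stmt15Aux
open Matrix

variable {N : ℕ}

/-- The quadratic form of a matrix. -/
def qf (A : Matrix (Fin N) (Fin N) ℝ) (y : Fin N → ℝ) : ℝ := ∑ i, A.mulVec y i * y i

lemma qf_cont (A : Matrix (Fin N) (Fin N) ℝ) : Continuous (qf A) := by
  unfold qf
  simp only [Matrix.mulVec, dotProduct]
  fun_prop

lemma qf_smul (A : Matrix (Fin N) (Fin N) ℝ) (t : ℝ) (w : Fin N → ℝ) :
    qf A (t • w) = t ^ 2 * qf A w := by
  unfold qf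
  rw [Matrix.mulVec_smul, Finset.mul_sum]
  refine Finset.sum_congr rfl fun i _ => ?_
  simp [Pi.smul_apply, smul_eq_mul]; ring

/-- Positive definite quadratic forms dominate a multiple of the sup-norm squared. -/
lemma qf_lb {A : Matrix (Fin N) (Fin N) ℝ} (hA : A.PosDef) :
    ∃ c > 0, ∀ w : Fin N → ℝ, c * ‖w‖ ^ 2 ≤ qf A w := by
  have hqpos : ∀ w : Fin N → ℝ, w ≠ 0 → 0 < qf A w := by
    intro w hw
    have := hA.dotProduct_mulVec_pos hw
    simpa [qf, dotProduct, mul_comm] using this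
  rcases Nat.eq_zero_or_pos N with hN | hN
  · refine ⟨1, one_pos, fun w => ?_⟩
    subst hN
    have : w = 0 := Subsingleton.elim _ _
    rw [this, norm_zero]
    simp [qf]
  · haveI : Nonempty (Fin N) := Fin.pos_iff_nonempty.mp hN
    have hsne : (Metric.sphere (0 : Fin N → ℝ) 1).Nonempty :=
      NormedSpace.sphere_nonempty.mpr zero_le_one
    obtain ⟨w₀, hw₀s, hmin⟩ :=
      (isCompact_sphere (0 : Fin N → ℝ) 1).exists_isMinOn hsne ((qf_cont A).continuousOn)
    have hw₀ : ‖w₀‖ = 1 := by simpa using hw₀s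
    have hw₀ne : w₀ ≠ 0 := by
      intro h; rw [h] at hw₀; simp at hw₀
    refine ⟨qf A w₀, hqpos w₀ hw₀ne, fun w => ?_⟩
    rcases eq_or_ne w 0 with rfl | hw
    · simp [qf]
    · have hnw : (0:ℝ) < ‖w‖ := norm_pos_iff.mpr hw
      have hu : ‖w‖⁻¹ • w ∈ Metric.sphere (0 : Fin N → ℝ) 1 := by
        simp [norm_smul, abs_of_pos (inv_pos.mpr hnw), inv_mul_cancel₀ hnw.ne']
      have h1 : qf A w₀ ≤ qf A (‖w‖⁻¹ • w) := hmin hu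
      have h2 : qf A (‖w‖⁻¹ • w) = (‖w‖⁻¹) ^ 2 * qf A w := qf_smul A _ w
      rw [h2] at h1
      have h3 : qf A w₀ * ‖w‖ ^ 2 ≤ ((‖w‖⁻¹) ^ 2 * qf A w) * ‖w‖ ^ 2 :=
        mul_le_mul_of_nonneg_right h1 (by positivity)
      calc qf A w₀ * ‖w‖ ^ 2 ≤ ((‖w‖⁻¹) ^ 2 * qf A w) * ‖w‖ ^ 2 := h3
        _ = qf A w := by field_simp

def ellLin (A : Matrix (Fin N) (Fin N) ℝ) :
    (Fin N → ℝ) →ₗ[ℝ] (Fin N → ℝ) →ₗ[ℝ] ℝ :=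
  LinearMap.mk₂ ℝ (fun w v => ∑ i, A.mulVec w i * v i)
    (fun w w' v => by
      simp [Matrix.mulVec_add, add_mul, Finset.sum_add_distrib])
    (fun t w v => by
      simp [Matrix.mulVec_smul, Finset.mul_sum, mul_assoc])
    (fun w v v' => by
      simp [mul_add, Finset.sum_add_distrib])
    (fun t w v => by
      simp [Finset.mul_sum]; exact Finset.sum_congr rfl fun i _ => by ring)

/-- The bilinear pairing `(w, v) ↦ ∑ i, (A w) i * v i` as a continuous linear map. -/
def ellc (A : Matrix (Fin N) (Fin N) ℝ) :
    (Fin N → ℝ) →L[ℝ] (Fin N → ℝ) →L[ℝ] ℝ :=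
  LinearMap.toContinuousLinearMap
    ((LinearMap.toContinuousLinearMap :
        ((Fin N → ℝ) →ₗ[ℝ] ℝ) ≃ₗ[ℝ] ((Fin N → ℝ) →L[ℝ] ℝ)).toLinearMap.comp (ellLin A))

@[simp] lemma ellc_apply (A : Matrix (Fin N) (Fin N) ℝ) (w v : Fin N → ℝ) :
    ellc A w v = ∑ i, A.mulVec w i * v i := rfl

lemma sum_swap_eq (A : Matrix (Fin N) (Fin N) ℝ) (w v : Fin N → ℝ) :
    ∑ i, v i * A.mulVec w i = ∑ i, Aᵀ.mulVec v i * w i := by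
  simp only [Matrix.mulVec, dotProduct, Matrix.transpose_apply,
    Finset.mul_sum, Finset.sum_mul]
  rw [Finset.sum_comm]
  exact Finset.sum_congr rfl fun i _ => Finset.sum_congr rfl fun j _ => by ring

lemma hasFDerivAt_qf (A : Matrix (Fin N) (Fin N) ℝ) (w : Fin N → ℝ) :
    HasFDerivAt (qf A) (ellc A w + ellc Aᵀ w) w := by
  set Amap : (Fin N → ℝ) →L[ℝ] (Fin N → ℝ) :=
    LinearMap.toContinuousLinearMap A.mulVecLin with hAmap
  have hAmap_apply : ∀ y, Amap y = A.mulVec y := fun y => by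
    simp [hAmap]
  have hL : ∀ i : Fin N, HasFDerivAt (fun y : Fin N → ℝ => A.mulVec y i)
      ((ContinuousLinearMap.proj (R := ℝ) (φ := fun _ : Fin N => ℝ) i).comp Amap) w := by
    intro i
    have h := ((ContinuousLinearMap.proj (R := ℝ) (φ := fun _ : Fin N => ℝ) i).comp
      Amap).hasFDerivAt (x := w)
    exact h
  have hP : ∀ i : Fin N, HasFDerivAt (fun y : Fin N → ℝ => y i)
      (ContinuousLinearMap.proj (R := ℝ) (φ := fun _ : Fin N => ℝ) i) w :=
    fun i => (ContinuousLinearMap.proj (R := ℝ) (φ := fun _ : Fin N => ℝ) i).hasFDerivAt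
  have hterm : ∀ i : Fin N, HasFDerivAt (fun y : Fin N → ℝ => A.mulVec y i * y i)
      (A.mulVec w i • (ContinuousLinearMap.proj (R := ℝ) (φ := fun _ : Fin N => ℝ) i)
        + w i • ((ContinuousLinearMap.proj (R := ℝ) (φ := fun _ : Fin N => ℝ) i).comp Amap)) w :=
    fun i => (hL i).mul (hP i)
  have hsum := HasFDerivAt.fun_sum (fun i (_ : i ∈ Finset.univ) => hterm i)
  have : (fun y : Fin N → ℝ => ∑ i, A.mulVec y i * y i) = qf A := rfl
  rw [this] at hsum
  refine hsum.congr_fderiv (Eq.symm ?_)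
  ext v
  simp only [ContinuousLinearMap.add_apply, ellc_apply, ContinuousLinearMap.coe_sum',
    Finset.sum_apply, ContinuousLinearMap.smul_apply, ContinuousLinearMap.proj_apply,
    ContinuousLinearMap.coe_comp', Function.comp_apply, smul_eq_mul]
  rw [Finset.sum_add_distrib]
  congr 1
  simp only [hAmap_apply]
  exact (sum_swap_eq A v w).symm

/-- Integrability of radial gaussians for the sup norm on `Fin N → ℝ`. -/
lemma gauss_integrable {b : ℝ} (hb : 0 < b) :
    Integrable (fun z : Fin N → ℝ => Real.exp (-(b * ‖z‖ ^ 2))) := by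
  have hb' : (0:ℝ) < b / (N + 1) := by positivity
  have hprod : Integrable (fun z : Fin N → ℝ => ∏ i, Real.exp (-(b / (N + 1)) * (z i) ^ 2)) :=
    Integrable.fintype_prod (fun _ => integrable_exp_neg_mul_sq hb')
  refine hprod.mono' ?_ (Filter.Eventually.of_forall fun z => ?_)
  · exact (Real.continuous_exp.comp
      (continuous_const.mul (continuous_norm.pow 2)).neg).aestronglyMeasurable
  · have hsum : ∑ i, (z i) ^ 2 ≤ (N + 1 : ℝ) * ‖z‖ ^ 2 := by
      have h1 : ∀ i, (z i) ^ 2 ≤ ‖z‖ ^ 2 := fun i => by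
        have h := norm_le_pi_norm z i
        have h0 : |z i| ≤ ‖z‖ := h
        calc (z i) ^ 2 = |z i| ^ 2 := (sq_abs _).symm
          _ ≤ ‖z‖ ^ 2 := by nlinarith [abs_nonneg (z i)]
      calc ∑ i, (z i) ^ 2 ≤ ∑ _i : Fin N, ‖z‖ ^ 2 := Finset.sum_le_sum fun i _ => h1 i
        _ = (N : ℝ) * ‖z‖ ^ 2 := by simp [Finset.sum_const, mul_comm]
        _ ≤ (N + 1 : ℝ) * ‖z‖ ^ 2 := by nlinarith [sq_nonneg ‖z‖]
    have key : -(b * ‖z‖ ^ 2) ≤ ∑ i, -(b / (N + 1)) * (z i) ^ 2 := by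
      have h2 : (b / (N + 1)) * ∑ i, (z i) ^ 2 ≤ b * ‖z‖ ^ 2 := by
        calc (b / (N + 1)) * ∑ i, (z i) ^ 2 ≤ (b / (N + 1)) * ((N + 1 : ℝ) * ‖z‖ ^ 2) :=
            mul_le_mul_of_nonneg_left hsum hb'.le
          _ = b * ‖z‖ ^ 2 := by field_simp
      have h3 : ∑ i, -(b / (N + 1)) * (z i) ^ 2 = -((b / (N + 1)) * ∑ i, (z i) ^ 2) := by
        rw [Finset.mul_sum, ← Finset.sum_neg_distrib]
        exact Finset.sum_congr rfl fun i _ => by ring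
      rw [h3]
      linarith
    rw [Real.norm_eq_abs, abs_of_pos (Real.exp_pos _)]
    calc Real.exp (-(b * ‖z‖ ^ 2)) ≤ Real.exp (∑ i, -(b / (N + 1)) * (z i) ^ 2) :=
        Real.exp_le_exp.mpr key
      _ = ∏ i, Real.exp (-(b / (N + 1)) * (z i) ^ 2) := Real.exp_sum _ _

end Stmt15Aux
end
open Stmt15Aux Matrix in
set_option maxHeartbeats 1000000 in
/-- Differentiation under a Gaussian kernel. -/
theorem stmt_15 (N : ℕ) (S : Matrix (Fin N) (Fin N) ℝ) (hS : S.PosDef)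
    (B : (Fin N → ℝ) →ₗ[ℝ] (Fin N → ℝ)) (φ : (Fin N → ℝ) → ℝ)
    (hφb : ∃ M : ℝ, ∀ y, |φ y| ≤ M) (hφm : Measurable φ) (x : Fin N → ℝ) :
    ∃ F' : (Fin N → ℝ) →L[ℝ] ℝ,
      HasFDerivAt
        (fun x' : Fin N → ℝ =>
          ∫ y : Fin N → ℝ,
            φ (B x' + y) * Real.exp (-(∑ i, S⁻¹.mulVec y i * y i) / 2))
        F' x ∧
      ∀ h : Fin N → ℝ,
        F' h = ∫ y : Fin N → ℝ,
          φ (B x + y) * (∑ i, S⁻¹.mulVec y i * B h i) *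
            Real.exp (-(∑ i, S⁻¹.mulVec y i * y i) / 2) := by
  classical
  obtain ⟨M, hM⟩ := hφb
  have hM0 : 0 ≤ M := le_trans (abs_nonneg _) (hM 0)
  set A : Matrix (Fin N) (Fin N) ℝ := S⁻¹ with hAdef
  have hA : A.PosDef := hS.inv
  have hAt : Aᵀ = A := by
    rw [← Matrix.conjTranspose_eq_transpose_of_trivial]
    exact hA.isHermitian
  obtain ⟨c, hc, hlb⟩ := qf_lb hA
  set g : (Fin N → ℝ) → ℝ := fun y => Real.exp (-(qf A y) / 2) with hgdef
  set Bc : (Fin N → ℝ) →L[ℝ] (Fin N → ℝ) := LinearMap.toContinuousLinearMap B with hBcdef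
  have hBc : ∀ v, Bc v = B v := fun v => rfl
  -- basic properties of g
  have hg_pos : ∀ w, 0 < g w := fun w => Real.exp_pos _
  have hg_cont : Continuous g := Real.continuous_exp.comp ((qf_cont A).neg.div_const 2)
  have hg_le : ∀ w, g w ≤ Real.exp (-(c * ‖w‖ ^ 2) / 2) := fun w =>
    Real.exp_le_exp.mpr (by have := hlb w; linarith)
  -- derivative of g
  have hg_deriv : ∀ w, HasFDerivAt g ((-(g w)) • ellc A w) w := by
    intro w
    have h1 := hasFDerivAt_qf A w
    rw [hAt] at h1
    have h3 := ((h1.neg).mul_const ((2:ℝ)⁻¹)).exp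
    rw [hgdef]
    have hfeq : (fun y => Real.exp (-(qf A y) / 2))
        = fun y => Real.exp (-qf A y * (2:ℝ)⁻¹) := by
      funext y
      rw [show -(qf A y) / 2 = -qf A y * (2:ℝ)⁻¹ by ring]
    rw [hfeq]
    refine h3.congr_fderiv (Eq.symm ?_)
    ext v
    simp only [ContinuousLinearMap.smul_apply, ContinuousLinearMap.neg_apply,
      ContinuousLinearMap.coe_smul', Pi.smul_apply, ContinuousLinearMap.add_apply,
      smul_eq_mul, ellc_apply, hgdef, neg_div, div_eq_mul_inv, Pi.neg_apply]
    ring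
  -- the pointwise derivative in x'
  set D : (Fin N → ℝ) → (Fin N → ℝ) → ((Fin N → ℝ) →L[ℝ] ℝ) :=
    fun x' z => (φ z * g (z - Bc x')) • ((ellc A (z - Bc x')).comp Bc) with hDdef
  have hD : ∀ (z x' : Fin N → ℝ),
      HasFDerivAt (fun u => φ z * g (z - Bc u)) (D x' z) x' := by
    intro z x'
    have hinner : HasFDerivAt (fun u : Fin N → ℝ => z - Bc u)
        ((0 : (Fin N → ℝ) →L[ℝ] (Fin N → ℝ)) - Bc) x' :=
      (hasFDerivAt_const z x').sub Bc.hasFDerivAt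
    have hcomp : HasFDerivAt (fun u : Fin N → ℝ => g (z - Bc u))
        (((-(g (z - Bc x'))) • ellc A (z - Bc x')).comp
          ((0 : (Fin N → ℝ) →L[ℝ] (Fin N → ℝ)) - Bc)) x' :=
      by have := HasFDerivAt.comp x' (hg_deriv (z - Bc x')) hinner; exact this
    have hfinal := hcomp.const_mul (φ z)
    refine hfinal.congr_fderiv (Eq.symm ?_)
    ext v
    simp only [hDdef, ContinuousLinearMap.smul_apply, ContinuousLinearMap.coe_comp',
      Function.comp_apply, ContinuousLinearMap.coe_smul', Pi.smul_apply,
      ContinuousLinearMap.sub_apply, ContinuousLinearMap.zero_apply, zero_sub,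
      ContinuousLinearMap.neg_apply, Pi.neg_apply, mul_neg, neg_neg, neg_mul,
      Finset.sum_neg_distrib, smul_eq_mul, ellc_apply]
    ring
  -- operator norm bound for ellc
  set Ca : ℝ := ∑ i, ∑ j, |A i j| with hCadef
  have hCa0 : (0:ℝ) ≤ Ca := Finset.sum_nonneg fun i _ =>
    Finset.sum_nonneg fun j _ => abs_nonneg _
  have hell : ∀ w, ‖ellc A w‖ ≤ Ca * ‖w‖ := by
    intro w
    refine ContinuousLinearMap.opNorm_le_bound _ (by positivity) fun v => ?_
    have h1 : ∀ i, |A.mulVec w i| ≤ (∑ j, |A i j|) * ‖w‖ := by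
      intro i
      calc |A.mulVec w i| = |∑ j, A i j * w j| := by
            simp [Matrix.mulVec, dotProduct]
        _ ≤ ∑ j, |A i j * w j| := Finset.abs_sum_le_sum_abs _ _
        _ ≤ ∑ j, |A i j| * ‖w‖ := Finset.sum_le_sum fun j _ => by
            rw [abs_mul]
            exact mul_le_mul_of_nonneg_left (norm_le_pi_norm w j) (abs_nonneg _)
        _ = (∑ j, |A i j|) * ‖w‖ := by rw [Finset.sum_mul]
    calc ‖ellc A w v‖ = |∑ i, A.mulVec w i * v i| := by rw [ellc_apply, Real.norm_eq_abs]
      _ ≤ ∑ i, |A.mulVec w i * v i| := Finset.abs_sum_le_sum_abs _ _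
      _ ≤ ∑ i, ((∑ j, |A i j|) * ‖w‖) * ‖v‖ := Finset.sum_le_sum fun i _ => by
          rw [abs_mul]
          exact mul_le_mul (h1 i) (norm_le_pi_norm v i) (abs_nonneg _)
            (by positivity)
      _ = Ca * ‖w‖ * ‖v‖ := by rw [← Finset.sum_mul, ← Finset.sum_mul]
  -- the elementary bound t e^{-ct²/4} ≤ K
  set K : ℝ := (Real.sqrt c)⁻¹ with hKdef
  have hsc : 0 < Real.sqrt c := Real.sqrt_pos.mpr hc
  have hK0 : 0 < K := inv_pos.mpr hsc
  have hK : ∀ t : ℝ, 0 ≤ t → t * Real.exp (-(c * t ^ 2) / 4) ≤ K := by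
    intro t ht
    have hKc : K * Real.sqrt c = 1 := inv_mul_cancel₀ hsc.ne'
    have hsq : Real.sqrt c ^ 2 = c := Real.sq_sqrt hc.le
    have h2 : c * t ^ 2 / 4 + 1 ≤ Real.exp (c * t ^ 2 / 4) := Real.add_one_le_exp _
    have h2' : K * (c * t ^ 2 / 4 + 1) ≤ K * Real.exp (c * t ^ 2 / 4) :=
      mul_le_mul_of_nonneg_left h2 hK0.le
    have ht1 : K * (Real.sqrt c * t) = t := by rw [← mul_assoc, hKc, one_mul]
    have e : K * (1 - Real.sqrt c * t / 2) ^ 2 = K + K * c * t ^ 2 / 4 - t := by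
      have expand : K * (1 - Real.sqrt c * t / 2) ^ 2
          = K - K * (Real.sqrt c * t) + K * ((Real.sqrt c * t) ^ 2) / 4 := by ring
      rw [expand, ht1, mul_pow, hsq]
      ring
    have epos := mul_nonneg hK0.le (sq_nonneg (1 - Real.sqrt c * t / 2))
    rw [e] at epos
    have h1 : t ≤ K * Real.exp (c * t ^ 2 / 4) := by linarith
    calc t * Real.exp (-(c * t ^ 2) / 4)
        ≤ (K * Real.exp (c * t ^ 2 / 4)) * Real.exp (-(c * t ^ 2) / 4) :=
          mul_le_mul_of_nonneg_right h1 (Real.exp_pos _).le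
      _ = K * Real.exp (c * t ^ 2 / 4 + -(c * t ^ 2) / 4) := by
          rw [mul_assoc, Real.exp_add]
      _ = K := by
          rw [show c * t ^ 2 / 4 + -(c * t ^ 2) / 4 = 0 by ring, Real.exp_zero, mul_one]
  -- the dominating function
  set r : ℝ := ‖Bc‖ with hrdef
  have hr0 : 0 ≤ r := norm_nonneg _
  set Cst : ℝ := M * r * Ca * K * Real.exp (c * r ^ 2 / 4) with hCstdef
  have hCst0 : 0 ≤ Cst := by positivity
  set bound : (Fin N → ℝ) → ℝ :=
    fun z => Cst * Real.exp (-(c / 8 * ‖z - Bc x‖ ^ 2)) with hbounddef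
  -- gaussians translated by Bc x are integrable
  have hgauss : ∀ b : ℝ, 0 < b →
      Integrable (fun z : Fin N → ℝ => Real.exp (-(b * ‖z - Bc x‖ ^ 2))) := by
    intro b hb
    exact (gauss_integrable hb).comp_sub_right (Bc x)
  have hboundInt : Integrable bound := ((hgauss (c / 8) (by positivity)).const_mul Cst)
  -- the key norm estimate
  have hbd : ∀ z : Fin N → ℝ, ∀ x' ∈ Metric.ball x 1, ‖D x' z‖ ≤ bound z := by
    intro z x' hx'
    set w : Fin N → ℝ := z - Bc x' with hwdef
    have hb1 : ‖D x' z‖ ≤ (M * g w) * (Ca * ‖w‖ * r) := by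
      have e1 : ‖φ z * g w‖ ≤ M * g w := by
        rw [Real.norm_eq_abs, abs_mul, abs_of_pos (hg_pos w)]
        exact mul_le_mul_of_nonneg_right (hM z) (hg_pos w).le
      have e2 : ‖(ellc A w).comp Bc‖ ≤ Ca * ‖w‖ * r :=
        le_trans (ContinuousLinearMap.opNorm_comp_le _ _)
          (mul_le_mul_of_nonneg_right (hell w) hr0)
      simp only [hDdef]
      refine le_trans (ContinuousLinearMap.opNorm_smul_le _ _) ?_
      exact mul_le_mul e1 e2 (norm_nonneg _) (by positivity)
    have hb2 : ‖w‖ * g w ≤ K * Real.exp (-(c * ‖w‖ ^ 2) / 4) := by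
      have e3 : g w ≤ Real.exp (-(c * ‖w‖ ^ 2) / 2) := hg_le w
      have e4 : ‖w‖ * g w ≤ ‖w‖ * Real.exp (-(c * ‖w‖ ^ 2) / 2) :=
        mul_le_mul_of_nonneg_left e3 (norm_nonneg _)
      have e5 : Real.exp (-(c * ‖w‖ ^ 2) / 2)
          = Real.exp (-(c * ‖w‖ ^ 2) / 4) * Real.exp (-(c * ‖w‖ ^ 2) / 4) := by
        rw [← Real.exp_add]; ring_nf
      have e6 : ‖w‖ * Real.exp (-(c * ‖w‖ ^ 2) / 2)
          ≤ K * Real.exp (-(c * ‖w‖ ^ 2) / 4) := by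
        rw [e5, ← mul_assoc]
        exact mul_le_mul_of_nonneg_right (hK ‖w‖ (norm_nonneg _)) (Real.exp_pos _).le
      linarith
    have hb3 : Real.exp (-(c * ‖w‖ ^ 2) / 4)
        ≤ Real.exp (c * r ^ 2 / 4) * Real.exp (-(c / 8 * ‖z - Bc x‖ ^ 2)) := by
      rw [← Real.exp_add]
      apply Real.exp_le_exp.mpr
      have ht : ‖z - Bc x‖ ≤ ‖w‖ + r := by
        have : z - Bc x = w + (Bc x' - Bc x) := by rw [hwdef]; abel
        rw [this]
        refine le_trans (norm_add_le _ _) ?_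
        have : ‖Bc x' - Bc x‖ ≤ r * ‖x' - x‖ := by
          rw [← map_sub]
          exact Bc.le_opNorm _
        have hx1 : ‖x' - x‖ ≤ 1 := by
          have := Metric.mem_ball.mp hx'
          rw [dist_eq_norm] at this
          linarith
        nlinarith [norm_nonneg (x' - x)]
      have ht0 : 0 ≤ ‖z - Bc x‖ := norm_nonneg _
      have hq1 : c * (‖z - Bc x‖ * ‖z - Bc x‖) ≤ c * ((‖w‖ + r) * (‖w‖ + r)) :=
        mul_le_mul_of_nonneg_left (mul_le_mul ht ht ht0 (by positivity)) hc.le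
      nlinarith [hq1, mul_nonneg hc.le (sq_nonneg (‖w‖ - r))]
    calc ‖D x' z‖ ≤ (M * g w) * (Ca * ‖w‖ * r) := hb1
      _ = (M * r * Ca) * (‖w‖ * g w) := by ring
      _ ≤ (M * r * Ca) * (K * Real.exp (-(c * ‖w‖ ^ 2) / 4)) :=
          mul_le_mul_of_nonneg_left hb2 (by positivity)
      _ ≤ (M * r * Ca) * (K * (Real.exp (c * r ^ 2 / 4)
            * Real.exp (-(c / 8 * ‖z - Bc x‖ ^ 2)))) := by
          have := mul_le_mul_of_nonneg_left hb3 hK0.le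
          exact mul_le_mul_of_nonneg_left this (by positivity)
      _ = bound z := by rw [hbounddef, hCstdef]; ring
  -- measurability of the integrands
  have hmeas : ∀ x' : Fin N → ℝ,
      AEStronglyMeasurable (fun z => φ z * g (z - Bc x')) volume := by
    intro x'
    exact (hφm.mul ((hg_cont.comp
      (continuous_id.sub continuous_const)).measurable)).aestronglyMeasurable
  have hD_meas : ∀ x' : Fin N → ℝ, AEStronglyMeasurable (fun z => D x' z) volume := by
    intro x'
    rw [hDdef]
    refine AEStronglyMeasurable.smul (f := fun z => φ z * g (z - Bc x'))
      (g := fun z => (ellc A (z - Bc x')).comp Bc) ?_ ?_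
    · exact (hφm.mul ((hg_cont.comp
        (continuous_id.sub continuous_const)).measurable)).aestronglyMeasurable
    · have hcont : Continuous fun z : Fin N → ℝ => (ellc A (z - Bc x')).comp Bc := by
        have h1 : Continuous fun z : Fin N → ℝ => ellc A (z - Bc x') :=
          (ellc A).continuous.comp (continuous_id.sub continuous_const)
        exact (((ContinuousLinearMap.compL ℝ (Fin N → ℝ) (Fin N → ℝ) ℝ).flip
          Bc).continuous).comp h1
      exact hcont.aestronglyMeasurable
  -- integrability of the integrand at x
  have hF_int : Integrable (fun z => φ z * g (z - Bc x)) := by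
    refine ((hgauss (c / 2) (by positivity)).const_mul M).mono' (hmeas x)
      (Filter.Eventually.of_forall fun z => ?_)
    rw [Real.norm_eq_abs, abs_mul, abs_of_pos (hg_pos _)]
    calc |φ z| * g (z - Bc x) ≤ M * g (z - Bc x) :=
        mul_le_mul_of_nonneg_right (hM z) (hg_pos _).le
      _ ≤ M * Real.exp (-(c * ‖z - Bc x‖ ^ 2) / 2) :=
          mul_le_mul_of_nonneg_left (hg_le _) hM0
      _ = M * Real.exp (-(c / 2 * ‖z - Bc x‖ ^ 2)) := by
          rw [show -(c * ‖z - Bc x‖ ^ 2) / 2 = -(c / 2 * ‖z - Bc x‖ ^ 2) by ring]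
  -- differentiation under the integral sign
  have key : HasFDerivAt (fun x' : Fin N → ℝ => ∫ z, φ z * g (z - Bc x'))
      (∫ z, D x z) x := by
    refine hasFDerivAt_integral_of_dominated_of_fderiv_le (Metric.ball_mem_nhds x one_pos)
      (Filter.Eventually.of_forall hmeas) hF_int (hD_meas x)
      (Filter.Eventually.of_forall fun z x' hx' => hbd z x' hx') hboundInt
      (Filter.Eventually.of_forall fun z x' _ => hD z x')
  -- integrability of D x
  have hDint : Integrable (fun z => D x z) := by
    exact hboundInt.mono' (hD_meas x) (Filter.Eventually.of_forall fun z =>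
      hbd z x (Metric.mem_ball_self one_pos))
  -- rewrite the original function to the translated form
  have hfun : (fun x' : Fin N → ℝ =>
      ∫ y : Fin N → ℝ, φ (B x' + y) * Real.exp (-(∑ i, S⁻¹.mulVec y i * y i) / 2))
      = fun x' : Fin N → ℝ => ∫ z, φ z * g (z - Bc x') := by
    funext x'
    rw [← MeasureTheory.integral_add_left_eq_self
      (fun z => φ z * g (z - Bc x')) (B x')]
    congr 1
    funext y
    rw [hBc, add_sub_cancel_left]
    rfl
  refine ⟨∫ z, D x z, ?_, ?_⟩
  · rw [hfun]; exact key
  · intro h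
    rw [ContinuousLinearMap.integral_apply hDint h]
    have hptw : ∀ z, D x z h
        = φ z * (∑ i, A.mulVec (z - B x) i * B h i)
          * Real.exp (-(qf A (z - B x)) / 2) := by
      intro z
      rw [hDdef]
      simp only [ContinuousLinearMap.smul_apply, ContinuousLinearMap.coe_comp',
        Function.comp_apply, smul_eq_mul, ellc_apply, hBc]
      ring
    rw [integral_congr_ae (Filter.Eventually.of_forall hptw)]
    rw [← MeasureTheory.integral_add_left_eq_self
      (fun z => φ z * (∑ i, A.mulVec (z - B x) i * B h i)
        * Real.exp (-(qf A (z - B x)) / 2)) (B x)]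
    congr 1
    funext y
    rw [add_sub_cancel_left]
    rfl
end

section
/- Let H be a separable Hilbert space with orthonormal basis (eₙ)ₙ, let α ∈ (0,1) and c > 0, let L be a nonnegative real random variable whose Laplace transform satisfies E[e^{−uL}] = e^{−c u^α} for all u ≥ 0, let (Xₙ)ₙ be a sequence of i.i.d. standard Gaussian random variables independent of L, and let (σₙ)ₙ and (ρₙ)ₙ be sequences of nonnegative reals with (ρₙ)ₙ bounded and strictly positive such that Σ_{n=1}^∞ ρₙ^{2r} σₙ^{2r} < ∞ for some r ∈ (0, α). Then the series Σ_{n=1}^∞ ρₙ σₙ √L Xₙ eₙ converges ℙ-almost surely in H. -/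
open MeasureTheory ProbabilityTheory Filter Topology
open scoped ENNReal

/-- Almost sure convergence of the series defining the subordinated cylindrical Wiener
process: if `L ≥ 0` has Laplace transform `E[e^{-uL}] = e^{-c u^α}`, `(Xₙ)` are i.i.d.
standard Gaussians independent of `L`, `(ρₙ)` is bounded and strictly positive, `σₙ ≥ 0`,
and `∑ₙ ρₙ^{2r} σₙ^{2r} < ∞` for some `r ∈ (0,α)`, then `∑ₙ ρₙ σₙ √L Xₙ eₙ` converges
almost surely in `H`. -/
theorem stmt_16 {H : Type*} [NormedAddCommGroup H] [InnerProductSpace ℝ H]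
    [CompleteSpace H] [TopologicalSpace.SeparableSpace H]
    {Ω : Type*} [MeasurableSpace Ω] (P : Measure Ω) [IsProbabilityMeasure P]
    (e : HilbertBasis ℕ ℝ H)
    (α c : ℝ) (hα : α ∈ Set.Ioo (0 : ℝ) 1) (hc : 0 < c)
    (L : Ω → ℝ) (hL : Measurable L) (hLnn : ∀ ω, 0 ≤ L ω)
    (hLap : ∀ u : ℝ, 0 ≤ u → ∫ ω, Real.exp (-u * L ω) ∂P = Real.exp (-c * u ^ α))
    (X : ℕ → Ω → ℝ) (hX : ∀ n, Measurable (X n))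
    (hiid : iIndepFun X P)
    (hXlaw : ∀ n, P.map (X n) = gaussianReal 0 1)
    (hindep : IndepFun L (fun ω n => X n ω) P)
    (σ ρ : ℕ → ℝ) (hσ : ∀ n, 0 ≤ σ n) (hρpos : ∀ n, 0 < ρ n)
    (hρbdd : ∃ M : ℝ, ∀ n, ρ n ≤ M)
    (r : ℝ) (hr : r ∈ Set.Ioo (0 : ℝ) α)
    (hsum : Summable (fun n => ρ n ^ (2 * r) * σ n ^ (2 * r))) :
    ∀ᵐ ω ∂P, ∃ l : H,
      Tendsto
        (fun N => ∑ n ∈ Finset.range N, (ρ n * σ n * Real.sqrt (L ω) * X n ω) • e n)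
        atTop (𝓝 l) := by
  obtain ⟨hr0, hrα⟩ := hr
  obtain ⟨hα0, hα1⟩ := hα
  set a : ℕ → ℝ := fun n => ρ n * σ n with ha
  have hann : ∀ n, 0 ≤ a n := fun n => mul_nonneg (hρpos n).le (hσ n)
  -- Step 1: `∑ aₙ² < ∞` by comparison with `∑ aₙ^{2r}`.
  have h2r0 : 0 < 2 * r := by linarith
  have hsum' : Summable (fun n => a n ^ (2 * r)) := by
    refine hsum.congr fun n => ?_
    rw [← Real.mul_rpow (hρpos n).le (hσ n)]
  have htend : Tendsto (fun n => a n ^ (2 * r)) atTop (𝓝 0) := hsum'.tendsto_atTop_zero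
  have ha2 : Summable (fun n => a n ^ 2) := by
    refine Summable.of_norm_bounded_eventually_nat hsum' ?_
    filter_upwards [htend.eventually (gt_mem_nhds one_pos)] with n hn
    rw [Real.norm_eq_abs, abs_of_nonneg (sq_nonneg _)]
    rcases eq_or_lt_of_le (hann n) with h0 | h0
    · simp [← h0, Real.zero_rpow (ne_of_gt h2r0)]
    · have ha1 : a n ≤ 1 := by
        by_contra hcon
        push_neg at hcon
        have : 1 ≤ a n ^ (2 * r) :=
          Real.one_le_rpow hcon.le h2r0.le
        linarith
      calc a n ^ 2 = a n ^ (2 : ℝ) := by rw [Real.rpow_two]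
        _ ≤ a n ^ (2 * r) := Real.rpow_le_rpow_of_exponent_ge h0 ha1 (by nlinarith)
  -- Step 2: second moment of the standard Gaussian is finite.
  have hMne : ∫⁻ x, ENNReal.ofReal (x ^ 2) ∂(gaussianReal 0 1) ≠ ∞ := by
    have hg : Measurable fun x : ℝ => ENNReal.ofReal (x ^ 2) := by fun_prop
    rw [gaussianReal_of_var_ne_zero 0 one_ne_zero,
      lintegral_withDensity_eq_lintegral_mul _ (measurable_gaussianPDF 0 1) hg]
    have heq : ∀ x : ℝ, (gaussianPDF 0 1 * fun x => ENNReal.ofReal (x ^ 2)) x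
        = ENNReal.ofReal (gaussianPDFReal 0 1 x * x ^ 2) := by
      intro x
      simp only [Pi.mul_apply, gaussianPDF]
      rw [← ENNReal.ofReal_mul (gaussianPDFReal_nonneg 0 1 x)]
    simp only [heq]
    have hint : Integrable (fun x : ℝ => gaussianPDFReal 0 1 x * x ^ 2) := by
      have h1 : Integrable (fun x : ℝ => x ^ (2 : ℝ) * Real.exp (-(1/2 : ℝ) * x ^ 2)) :=
        integrable_rpow_mul_exp_neg_mul_sq (by norm_num) (by norm_num)
      have := (h1.const_mul ((Real.sqrt (2 * Real.pi * (1 : NNReal)))⁻¹))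
      refine this.congr ?_
      filter_upwards with x
      simp only [gaussianPDFReal]
      rw [Real.rpow_two]
      push_cast
      ring_nf
    rw [lintegral_ofReal_ne_top_iff_integrable hint.aestronglyMeasurable]
    · exact hint
    · filter_upwards with x
      exact mul_nonneg (gaussianPDFReal_nonneg 0 1 x) (sq_nonneg x)
  -- lintegral of `Xₙ²` equals the Gaussian second moment
  have hXn : ∀ n, ∫⁻ ω, ENNReal.ofReal ((X n ω) ^ 2) ∂P
      = ∫⁻ x, ENNReal.ofReal (x ^ 2) ∂(gaussianReal 0 1) := by
    intro n
    have hg : Measurable fun x : ℝ => ENNReal.ofReal (x ^ 2) := by fun_prop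
    rw [← hXlaw n, lintegral_map hg (hX n)]
  -- Step 3: a.e. finiteness of `∑ aₙ² Xₙ²`.
  have hmeas : ∀ n, Measurable (fun ω => ENNReal.ofReal (a n ^ 2 * (X n ω) ^ 2)) := by
    intro n
    exact (((hX n).pow_const 2).const_mul _).ennreal_ofReal
  have htsum_ne : ∫⁻ ω, ∑' n, ENNReal.ofReal (a n ^ 2 * (X n ω) ^ 2) ∂P ≠ ∞ := by
    rw [lintegral_tsum fun n => (hmeas n).aemeasurable]
    have heq : ∀ n, ∫⁻ ω, ENNReal.ofReal (a n ^ 2 * (X n ω) ^ 2) ∂P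
        = ENNReal.ofReal (a n ^ 2) * ∫⁻ x, ENNReal.ofReal (x ^ 2) ∂(gaussianReal 0 1) := by
      intro n
      calc ∫⁻ ω, ENNReal.ofReal (a n ^ 2 * (X n ω) ^ 2) ∂P
          = ∫⁻ ω, ENNReal.ofReal (a n ^ 2) * ENNReal.ofReal ((X n ω) ^ 2) ∂P := by
            congr 1; funext ω; rw [← ENNReal.ofReal_mul (sq_nonneg _)]
        _ = ENNReal.ofReal (a n ^ 2) * ∫⁻ ω, ENNReal.ofReal ((X n ω) ^ 2) ∂P :=
            lintegral_const_mul _ ((hX n).pow_const 2).ennreal_ofReal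
        _ = _ := by rw [hXn n]
    simp only [heq]
    rw [ENNReal.tsum_mul_right]
    refine ENNReal.mul_ne_top ?_ hMne
    rw [← ENNReal.ofReal_tsum_of_nonneg (fun n => sq_nonneg _) ha2]
    exact ENNReal.ofReal_ne_top
  have hae : ∀ᵐ ω ∂P, (∑' n, ENNReal.ofReal (a n ^ 2 * (X n ω) ^ 2)) ≠ ∞ := by
    have := ae_lt_top (Measurable.ennreal_tsum hmeas) htsum_ne
    filter_upwards [this] with ω hω using hω.ne
  -- Conclusion
  filter_upwards [hae] with ω hω
  have hsummable : Summable (fun n => a n ^ 2 * (X n ω) ^ 2) := by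
    refine (ENNReal.summable_toReal hω).congr fun n => ?_
    exact ENNReal.toReal_ofReal (mul_nonneg (sq_nonneg _) (sq_nonneg _))
  have hcs : Summable (fun n => ‖(ρ n * σ n * Real.sqrt (L ω) * X n ω : ℝ)‖ ^ 2) := by
    refine (hsummable.mul_left (L ω)).congr fun n => ?_
    rw [Real.norm_eq_abs, sq_abs]
    have hs : Real.sqrt (L ω) ^ 2 = L ω := Real.sq_sqrt (hLnn ω)
    simp only [ha]
    linear_combination -(ρ n ^ 2 * σ n ^ 2 * X n ω ^ 2) * hs
  have hsumH := (e.orthonormal.orthogonalFamily.summable_iff_norm_sq_summable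
      (fun n => (ρ n * σ n * Real.sqrt (L ω) * X n ω : ℝ))).mpr hcs
  simp only [LinearIsometry.toSpanSingleton_apply] at hsumH
  exact ⟨_, hsumH.hasSum.tendsto_sum_nat⟩
end
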